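/- Let G be a simple graph with an interval representation, and let P_1, P_2,..., P_l be mutually induced paths, where P_1 joins vertices a and b and has at least one inner vertex. Let P_1' be another path in G joining a and b, with no inner chords and at least one inner vertex, such that the covered interval of P_1' is contained in the covered interval of P_1 (I_{P_1'} ⊆ I_{P_1}). Then P_1', P_2,..., P_l are mutually induced. (Consequently, in any solution containing the path P_1, the path P_1 can be replaced by P_1'.) -/

import Mathlib

open SimpleGraph

variable {V : Type*}

/-- An interval representation of a simple graph: each vertex gets a closed real
interval `[l u, r u]` with `l u < r u`, and two distinct vertices are adjacent
iff their intervals intersect. -/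
structure IntervalRep (G : SimpleGraph V) where
  l : V → ℝ
  r : V → ℝ
  lt : ∀ u, l u < r u
  adj_iff : ∀ u v, u ≠ v →
    (G.Adj u v ↔ (Set.Icc (l u) (r u) ∩ Set.Icc (l v) (r v)).Nonempty)

/-- A path in `G` together with its two end-vertices. -/
structure IndexedPath (G : SimpleGraph V) where
  a : V
  b : V
  walk : G.Walk a b
  isPath : walk.IsPath

namespace IndexedPath

variable {G : SimpleGraph V}

/-- The set of end-vertices of the path. -/
def ends (P : IndexedPath G) : Set V := {P.a, P.b}

/-- `v` is an inner vertex of `P`, i.e. a vertex of `P` other than its ends. -/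
def IsInner (P : IndexedPath G) (v : V) : Prop :=
  v ∈ P.walk.support.tail.dropLast

/-- `P` has no inner chords: any edge between two of its vertices is either an
edge of the path itself or the edge between its two end-vertices. -/
def NoInnerChords (P : IndexedPath G) : Prop :=
  ∀ x y, x ∈ P.walk.support → y ∈ P.walk.support → G.Adj x y →
    s(x, y) ∈ P.walk.edges ∨ s(x, y) = s(P.a, P.b)

/-- `P` joins the vertices `x` and `y`. -/
def Joins (P : IndexedPath G) (x y : V) : Prop :=
  (P.a = x ∧ P.b = y) ∨ (P.a = y ∧ P.b = x)

end IndexedPath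

/-- A family of pairwise distinct paths is mutually induced if: (i) each path has
no inner chords; (ii) two distinct paths share only vertices that are ends of both;
(iii) no inner vertex of one path is adjacent to a vertex `v` of another path,
except when `v` is an end-vertex of both paths. -/
def MutuallyInduced {G : SimpleGraph V} {ι : Type*} (P : ι → IndexedPath G) : Prop :=
  (∀ i j, i ≠ j → P i ≠ P j) ∧
  (∀ i, (P i).NoInnerChords) ∧
  (∀ i j, i ≠ j → ∀ v, v ∈ (P i).walk.support → v ∈ (P j).walk.support →
      v ∈ (P i).ends ∧ v ∈ (P j).ends) ∧
  (∀ i j, i ≠ j → ∀ u v, (P i).IsInner u → v ∈ (P j).walk.support → G.Adj u v →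
      v ∈ (P i).ends ∧ v ∈ (P j).ends)

/-- The covered interval of a path: the union of the intervals of its inner vertices. -/
def coveredInterval {G : SimpleGraph V} (ρ : IntervalRep G) (P : IndexedPath G) : Set ℝ :=
  ⋃ v ∈ {w : V | P.IsInner w}, Set.Icc (ρ.l v) (ρ.r v)

/-- A solution to Requirement Induced Disjoint Paths: `l = r 1 + ... + r k`
mutually induced paths, exactly `r i` of which join `s i` and `t i`. -/
def RIDPSolution {G : SimpleGraph V} (k : ℕ) (s t : Fin k → V) (r : Fin k → ℕ)
    {l : ℕ} (P : Fin l → IndexedPath G) : Prop :=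
  l = ∑ i, r i ∧ MutuallyInduced P ∧
    ∀ i, Nat.card {j : Fin l // (P j).Joins (s i) (t i)} = r i

namespace IndexedPath

variable {G : SimpleGraph V}

lemma isInner_mem_support {P : IndexedPath G} {v : V}
    (h : P.IsInner v) : v ∈ P.walk.support :=
  List.mem_of_mem_tail (List.dropLast_subset _ h)

lemma ends_eq {P : IndexedPath G} {x y : V} (h : P.Joins x y) :
    P.ends = ({x, y} : Set V) := by
  rcases h with ⟨h1, h2⟩ | ⟨h1, h2⟩ <;> simp [IndexedPath.ends, h1, h2, Set.pair_comm]

lemma mem_support_of_mem_ends {P : IndexedPath G} {v : V} (h : v ∈ P.ends) :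
    v ∈ P.walk.support := by
  rcases h with h | h <;> subst h
  · exact P.walk.start_mem_support
  · exact P.walk.end_mem_support

lemma getLast_congr' {α : Type*} {l m : List α} (h : l = m) (hl : l ≠ []) :
    l.getLast hl = m.getLast (h ▸ hl) := by subst h; rfl

lemma getLast_tail {P : IndexedPath G} (hne : P.walk.support.tail ≠ []) :
    P.walk.support.tail.getLast hne = P.b := by
  have h0 := getLast_congr' (SimpleGraph.Walk.support_eq_cons P.walk) (by simp)
  rw [List.getLast_cons hne] at h0
  rw [← h0]
  exact P.walk.getLast_support

lemma not_isInner_of_mem_ends {P : IndexedPath G} {v : V}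
    (hv : v ∈ P.ends) : ¬ P.IsInner v := by
  intro hi
  have hnd := P.isPath.support_nodup
  rw [SimpleGraph.Walk.support_eq_cons, List.nodup_cons] at hnd
  have hvt : v ∈ P.walk.support.tail := List.dropLast_subset _ hi
  rcases hv with h | h
  · exact hnd.1 (h ▸ hvt)
  · have hne : P.walk.support.tail ≠ [] := List.ne_nil_of_mem hvt
    have hnd2 := hnd.2
    rw [← List.dropLast_append_getLast hne, List.nodup_append] at hnd2
    exact hnd2.2.2 v hi v (List.mem_singleton.2 (h.trans (getLast_tail hne).symm)) rfl

lemma mem_support_cases {P : IndexedPath G} {v : V}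
    (h : v ∈ P.walk.support) : v ∈ P.ends ∨ P.IsInner v := by
  rw [SimpleGraph.Walk.support_eq_cons] at h
  rcases List.mem_cons.1 h with h | h
  · exact Or.inl (Or.inl h)
  · have hne : P.walk.support.tail ≠ [] := List.ne_nil_of_mem h
    rw [← List.dropLast_append_getLast hne] at h
    rcases List.mem_append.1 h with h | h
    · exact Or.inr h
    · exact Or.inl (Or.inr ((List.mem_singleton.1 h).trans (getLast_tail hne)))

end IndexedPath

/-- if `P i₀` joins `a` and `b` and has an inner vertex, and `P'` is
another path joining `a` and `b` with no inner chords, at least one inner vertex,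
and covered interval contained in that of `P i₀`, then replacing `P i₀` by `P'`
keeps the family mutually induced. -/
theorem statement10 {V : Type*} (G : SimpleGraph V) (ρ : IntervalRep G)
    {ι : Type*} [DecidableEq ι] (P : ι → IndexedPath G) (hMI : MutuallyInduced P)
    (i₀ : ι) (a b : V)
    (hJ : (P i₀).Joins a b) (hinner : ∃ v, (P i₀).IsInner v)
    (P' : IndexedPath G) (hJ' : P'.Joins a b)
    (hnc' : P'.NoInnerChords) (hinner' : ∃ v, P'.IsInner v)
    (hsub : coveredInterval ρ P' ⊆ coveredInterval ρ (P i₀)) :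
    MutuallyInduced (Function.update P i₀ P') := by
  obtain ⟨hdist, hnc, hshare, hadj⟩ := hMI
  have hends : P'.ends = (P i₀).ends := by
    rw [IndexedPath.ends_eq hJ', IndexedPath.ends_eq hJ]
  have hmemCI : ∀ (Q : IndexedPath G) (p : ℝ), p ∈ coveredInterval ρ Q ↔
      ∃ w, Q.IsInner w ∧ p ∈ Set.Icc (ρ.l w) (ρ.r w) := by
    intro Q p
    simp only [coveredInterval, Set.mem_iUnion, Set.mem_setOf_eq, Set.mem_Icc, exists_prop]
  -- Key lemma: an inner vertex of `P'` lying on another path `P j` forces ends.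
  have keyA : ∀ v, P'.IsInner v → ∀ j, j ≠ i₀ → v ∈ (P j).walk.support →
      v ∈ (P i₀).ends ∧ v ∈ (P j).ends := by
    intro v hv j hj hvj
    have hp : ρ.l v ∈ coveredInterval ρ P' :=
      (hmemCI _ _).2 ⟨v, hv, le_refl _, (ρ.lt v).le⟩
    obtain ⟨w, hw, hpw⟩ := (hmemCI _ _).1 (hsub hp)
    by_cases hwv : w = v
    · subst hwv
      exact hshare i₀ j hj.symm w (IndexedPath.isInner_mem_support hw) hvj
    · have hadjwv : G.Adj w v := by
        rw [ρ.adj_iff w v hwv]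
        exact ⟨ρ.l v, hpw, le_refl _, (ρ.lt v).le⟩
      exact hadj i₀ j hj.symm w v hw hvj hadjwv
  -- Key lemma: an inner vertex of `P'` adjacent to a vertex of `P j` forces ends.
  have keyA' : ∀ u v, P'.IsInner u → ∀ j, j ≠ i₀ → v ∈ (P j).walk.support →
      G.Adj u v → v ∈ (P i₀).ends ∧ v ∈ (P j).ends := by
    intro u v hu j hj hvj huv
    obtain ⟨p, hpu, hpv⟩ := (ρ.adj_iff u v huv.ne).1 huv
    have hp : p ∈ coveredInterval ρ P' := (hmemCI _ _).2 ⟨u, hu, hpu⟩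
    obtain ⟨w, hw, hpw⟩ := (hmemCI _ _).1 (hsub hp)
    by_cases hwv : w = v
    · subst hwv
      exact hshare i₀ j hj.symm w (IndexedPath.isInner_mem_support hw) hvj
    · have hadjwv : G.Adj w v := by
        rw [ρ.adj_iff w v hwv]
        exact ⟨p, hpw, hpv⟩
      exact hadj i₀ j hj.symm w v hw hvj hadjwv
  -- Key lemma: no inner vertex of another path is adjacent to an inner vertex of `P'`.
  have keyB : ∀ u v, G.Adj u v → P'.IsInner v → ∀ i, i ≠ i₀ → ¬ (P i).IsInner u := by
    intro u v huv hv i hi hu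
    obtain ⟨p, hpu, hpv⟩ := (ρ.adj_iff u v huv.ne).1 huv
    have hp : p ∈ coveredInterval ρ P' := (hmemCI _ _).2 ⟨v, hv, hpv⟩
    obtain ⟨w, hw, hpw⟩ := (hmemCI _ _).1 (hsub hp)
    by_cases hwu : w = u
    · subst hwu
      have h2 := hshare i i₀ hi w (IndexedPath.isInner_mem_support hu)
        (IndexedPath.isInner_mem_support hw)
      exact IndexedPath.not_isInner_of_mem_ends h2.1 hu
    · have hadjuw : G.Adj u w := by
        rw [ρ.adj_iff u w (Ne.symm hwu)]
        exact ⟨p, hpu, hpw⟩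
      have h2 := hadj i i₀ hi u w hu (IndexedPath.isInner_mem_support hw) hadjuw
      exact IndexedPath.not_isInner_of_mem_ends h2.2 hw
  refine ⟨?_, ?_, ?_, ?_⟩
  · -- pairwise distinct
    intro i j hij
    by_cases hi : i = i₀ <;> by_cases hj : j = i₀
    · exact absurd (hi.trans hj.symm) hij
    · subst hi
      rw [Function.update_self, Function.update_of_ne hj]
      intro heq
      obtain ⟨v, hv⟩ := hinner'
      have hvj : (P j).IsInner v := heq ▸ hv
      have h2 := keyA v hv j hj (IndexedPath.isInner_mem_support hvj)
      exact IndexedPath.not_isInner_of_mem_ends h2.2 hvj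
    · subst hj
      rw [Function.update_self, Function.update_of_ne hi]
      intro heq
      obtain ⟨v, hv⟩ := hinner'
      have hvi : (P i).IsInner v := heq ▸ hv
      have h2 := keyA v hv i hi (IndexedPath.isInner_mem_support hvi)
      exact IndexedPath.not_isInner_of_mem_ends h2.2 hvi
    · rw [Function.update_of_ne hi, Function.update_of_ne hj]
      exact hdist i j hij
  · -- no inner chords
    intro i
    by_cases hi : i = i₀
    · subst hi; rw [Function.update_self]; exact hnc'
    · rw [Function.update_of_ne hi]; exact hnc i
  · -- shared vertices are ends of both
    intro i j hij v hvi hvj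
    by_cases hi : i = i₀ <;> by_cases hj : j = i₀
    · exact absurd (hi.trans hj.symm) hij
    · subst hi
      rw [Function.update_self] at hvi ⊢
      rw [Function.update_of_ne hj] at hvj ⊢
      rcases IndexedPath.mem_support_cases hvi with he | hin
      · have hv0 : v ∈ (P i).walk.support :=
          IndexedPath.mem_support_of_mem_ends (hends ▸ he)
        exact ⟨he, (hshare i j (Ne.symm hj) v hv0 hvj).2⟩
      · have h2 := keyA v hin j hj hvj
        exact ⟨by rw [hends]; exact h2.1, h2.2⟩
    · subst hj
      rw [Function.update_self] at hvj ⊢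
      rw [Function.update_of_ne hi] at hvi ⊢
      rcases IndexedPath.mem_support_cases hvj with he | hin
      · have hv0 : v ∈ (P j).walk.support :=
          IndexedPath.mem_support_of_mem_ends (hends ▸ he)
        exact ⟨(hshare i j hi v hvi hv0).1, he⟩
      · have h2 := keyA v hin i hi hvi
        exact ⟨h2.2, by rw [hends]; exact h2.1⟩
    · rw [Function.update_of_ne hi] at hvi ⊢
      rw [Function.update_of_ne hj] at hvj ⊢
      exact hshare i j hij v hvi hvj
  · -- adjacency condition
    intro i j hij u v hu hvj huv
    by_cases hi : i = i₀ <;> by_cases hj : j = i₀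
    · exact absurd (hi.trans hj.symm) hij
    · subst hi
      rw [Function.update_self] at hu ⊢
      rw [Function.update_of_ne hj] at hvj ⊢
      have h2 := keyA' u v hu j hj hvj huv
      exact ⟨by rw [hends]; exact h2.1, h2.2⟩
    · subst hj
      rw [Function.update_self] at hvj ⊢
      rw [Function.update_of_ne hi] at hu ⊢
      rcases IndexedPath.mem_support_cases hvj with he | hin
      · have hv0 : v ∈ (P j).walk.support :=
          IndexedPath.mem_support_of_mem_ends (hends ▸ he)
        exact ⟨(hadj i j hi u v hu hv0 huv).1, he⟩
      · exact absurd hu (keyB u v huv hin i hi)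
    · rw [Function.update_of_ne hi] at hu ⊢
      rw [Function.update_of_ne hj] at hvj ⊢
      exact hadj i j hij u v hu hvj huv
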